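/- Let V be a finite set, let f : 2^V → ℤ be a skew-supermodular function, and let F be a finite multiset of edges on V (each edge an unordered pair of distinct vertices). Then the residual requirement function g : 2^V → ℤ defined by g(S) = f(S) − |δ_F(S)| is skew-supermodular. -/
import Mathlib


open Finset

/-- Skew-supermodularity of an integer-valued set function. -/
def SkewSupermodular {V : Type*} [DecidableEq V] (f : Finset V → ℤ) : Prop :=
  ∀ A B : Finset V,
    f A + f B ≤ f (A ∩ B) + f (A ∪ B) ∨ f A + f B ≤ f (A \ B) + f (B \ A)

/-- The cut value `|δ_F(S)|` of a multiset of edges, encoded as an indexed family of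
edges with endpoint maps `a b : ι → V` (the index type `ι` accounts for multiplicity). -/
def edgeCut {V ι : Type*} [DecidableEq V] [Fintype ι] (a b : ι → V) (S : Finset V) : ℤ :=
  ((Finset.univ.filter (fun i => ¬((a i ∈ S) ↔ (b i ∈ S)))).card : ℤ)

/-- Indicator of one edge being cut. -/
def edgeInd {V : Type*} [DecidableEq V] (u v : V) (S : Finset V) : ℤ :=
  if ¬((u ∈ S) ↔ (v ∈ S)) then 1 else 0

lemma edgeCut_eq_sum {V ι : Type*} [DecidableEq V] [Fintype ι] (a b : ι → V)
    (S : Finset V) : edgeCut a b S = ∑ i : ι, edgeInd (a i) (b i) S := by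
  simp only [edgeCut, edgeInd, Finset.card_filter]
  push_cast
  rfl

lemma edgeInd_sub {V : Type*} [DecidableEq V] (u v : V) (A B : Finset V) :
    edgeInd u v (A ∩ B) + edgeInd u v (A ∪ B) ≤ edgeInd u v A + edgeInd u v B := by
  simp only [edgeInd, Finset.mem_inter, Finset.mem_union]
  by_cases h1 : u ∈ A <;> by_cases h2 : u ∈ B <;> by_cases h3 : v ∈ A <;>
    by_cases h4 : v ∈ B <;> simp [h1, h2, h3, h4]

lemma edgeInd_pos {V : Type*} [DecidableEq V] (u v : V) (A B : Finset V) :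
    edgeInd u v (A \ B) + edgeInd u v (B \ A) ≤ edgeInd u v A + edgeInd u v B := by
  simp only [edgeInd, Finset.mem_sdiff]
  by_cases h1 : u ∈ A <;> by_cases h2 : u ∈ B <;> by_cases h3 : v ∈ A <;>
    by_cases h4 : v ∈ B <;> simp [h1, h2, h3, h4]

lemma edgeCut_sub {V ι : Type*} [DecidableEq V] [Fintype ι] (a b : ι → V)
    (A B : Finset V) :
    edgeCut a b (A ∩ B) + edgeCut a b (A ∪ B) ≤ edgeCut a b A + edgeCut a b B := by
  simp only [edgeCut_eq_sum, ← Finset.sum_add_distrib]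
  exact Finset.sum_le_sum fun i _ => edgeInd_sub (a i) (b i) A B

lemma edgeCut_pos {V ι : Type*} [DecidableEq V] [Fintype ι] (a b : ι → V)
    (A B : Finset V) :
    edgeCut a b (A \ B) + edgeCut a b (B \ A) ≤ edgeCut a b A + edgeCut a b B := by
  simp only [edgeCut_eq_sum, ← Finset.sum_add_distrib]
  exact Finset.sum_le_sum fun i _ => edgeInd_pos (a i) (b i) A B

/-- If `f` is skew-supermodular and `F` is a finite multiset of edges on `V`, then the
residual requirement function `g(S) = f(S) - |δ_F(S)|` is skew-supermodular. -/
theorem stmt4 {V ι : Type*} [Fintype V] [DecidableEq V] [Fintype ι]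
    (f : Finset V → ℤ) (hf : SkewSupermodular f)
    (a b : ι → V) (hab : ∀ i, a i ≠ b i) :
    SkewSupermodular (fun S => f S - edgeCut a b S) := by
  intro A B
  rcases hf A B with h | h
  · left
    have := edgeCut_sub a b A B
    dsimp only
    linarith
  · right
    have := edgeCut_pos a b A B
    dsimp only
    linarith
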